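/- The 2-dissection identity f₁⁴ = f₄¹⁰ / (f₂² f₈⁴) − 4q f₂² f₈⁴ / f₄² holds as an identity of formal power series. -/

import Mathlib

open PowerSeries

/-- `f m` is the eta-type product `(q^m; q^m)_∞ = ∏_{k ≥ 1} (1 - q^{m k})`,
realized as a formal power series over ℚ: its `n`-th coefficient is that of the
stabilized partial product. -/
noncomputable def f (m : ℕ) : PowerSeries ℚ :=
  PowerSeries.mk fun n => PowerSeries.coeff n
    (∏ k ∈ Finset.range (n + 1), (1 - (PowerSeries.X : PowerSeries ℚ) ^ (m * (k + 1))))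

namespace Diss

open Finset

noncomputable section

abbrev R := PowerSeries ℚ

variable (q : R)

/-- Gaussian binomial in base `Q = q^2`, as a power series. -/
def gb : ℕ → ℕ → R
  | 0, 0 => 1
  | 0, _+1 => 0
  | n+1, 0 => gb n 0
  | n+1, k+1 => gb n (k+1) + (q^2)^(n - k) * gb n k

@[simp] lemma gb_zero_zero : gb q 0 0 = 1 := rfl
@[simp] lemma gb_zero_succ (k : ℕ) : gb q 0 (k+1) = 0 := rfl
lemma gb_succ_zero (n : ℕ) : gb q (n+1) 0 = gb q n 0 := rfl
lemma gb_succ_succ (n k : ℕ) :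
    gb q (n+1) (k+1) = gb q n (k+1) + (q^2)^(n - k) * gb q n k := rfl

@[simp] lemma gb_zero_right (n : ℕ) : gb q n 0 = 1 := by
  induction n with
  | zero => rfl
  | succ n ih => rw [gb_succ_zero, ih]

lemma gb_eq_zero (n k : ℕ) (h : n < k) : gb q n k = 0 := by
  induction n generalizing k with
  | zero =>
      rcases k with _|k
      · omega
      · rfl
  | succ n ih =>
      rcases k with _|k
      · omega
      · rw [gb_succ_succ, ih _ (by omega), ih _ (by omega), mul_zero, add_zero]

@[simp] lemma gb_self (n : ℕ) : gb q n n = 1 := by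
  induction n with
  | zero => rfl
  | succ n ih => rw [gb_succ_succ, gb_eq_zero q n (n+1) (by omega), ih, zero_add,
      Nat.sub_self, pow_zero, one_mul]

/-- Finite q-Pochhammer `∏_{k=1}^{j} (1 - q^{2k})`. -/
def pf (j : ℕ) : R := ∏ k ∈ range j, (1 - (q^2)^(k+1))

@[simp] lemma pf_zero : pf q 0 = 1 := rfl
lemma pf_succ (j : ℕ) : pf q (j+1) = pf q j * (1 - (q^2)^(j+1)) := prod_range_succ _ _

/-- Product formula: `gb n k * pf k * pf (n-k) = pf n` for `k ≤ n`. -/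
lemma gb_pf (n : ℕ) : ∀ k, k ≤ n → gb q n k * pf q k * pf q (n - k) = pf q n := by
  induction n with
  | zero => intro k hk; interval_cases k; simp
  | succ n ih =>
      intro k hk
      rcases k with _|k
      · simp
      rcases Nat.lt_or_ge n (k+1) with h2 | h2
      · have hk' : k = n := by omega
        subst hk'
        simp [Nat.sub_self]
      · have hA := ih (k+1) h2
        have hB := ih k (by omega)
        have f1 : pf q (n-k) = pf q (n-(k+1)) * (1 - (q^2)^(n-k)) := by
          have e1 : n - k = n - (k+1) + 1 := by omega
          rw [e1, pf_succ, ← e1]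
        have f2 : pf q (k+1) = pf q k * (1 - (q^2)^(k+1)) := pf_succ q k
        have f3 : pf q (n+1) = pf q n * (1 - (q^2)^(n+1)) := pf_succ q n
        have f4 : (q^2)^(n-k) * (q^2)^(k+1) = (q^2)^(n+1) := by
          rw [← pow_add]; congr 1; omega
        have e0 : n + 1 - (k+1) = n - k := by omega
        rw [gb_succ_succ, e0, add_mul, add_mul]
        linear_combination (1 - (q^2)^(n-k)) * hA + (gb q n (k+1) * pf q (k+1)) * f1
          + ((q^2)^(n-k) * gb q n k * pf q (n-k)) * f2
          + ((q^2)^(n-k) * (1 - (q^2)^(k+1))) * hB + (-1 : R) * f3 + (- pf q n) * f4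

lemma constantCoeff_pf (hq : constantCoeff q = 0) (j : ℕ) :
    constantCoeff (pf q j) = 1 := by
  unfold pf
  rw [map_prod, Finset.prod_eq_one]
  intro k _
  simp [hq, zero_pow]

lemma pf_ne (hq : constantCoeff q = 0) (j : ℕ) : pf q j ≠ 0 := by
  intro h
  have := constantCoeff_pf q hq j
  rw [h, map_zero] at this
  exact zero_ne_one this

def dd (N i : ℕ) : ℕ := ((i:ℤ) - N).natAbs

lemma dd_sq (N i : ℕ) : ((dd N i : ℤ))^2 = ((i:ℤ) - N)^2 := Int.natAbs_sq _

/-- Coefficient of `z^i` in `∏_{k=1}^N (1+zq^{2k-1})(z+q^{2k-1})`. -/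
def c (N i : ℕ) : R := gb q (2*N) i * q ^ ((dd N i)^2)

lemma c_rec (hq : constantCoeff q = 0) (N i : ℕ) :
    c q (N+1) i = q^(2*N+1) * c q N i
      + (1 + (q^2)^(2*N+1)) * (if i = 0 then 0 else c q N (i-1))
      + q^(2*N+1) * (if i ≤ 1 then 0 else c q N (i-2)) := by
  have epow : ∀ a b : ℕ, a = b → q^a = q^b := fun a b h => by rw [h]
  rcases Nat.eq_zero_or_pos i with rfl | hi
  · rw [if_pos rfl, if_pos (by omega)]
    simp only [c, mul_zero, add_zero]
    rw [show 2*(N+1) = 2*N+1+1 by ring, gb_zero_right, gb_zero_right, one_mul, one_mul,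
      ← pow_add]
    apply epow
    have h1 : ((dd (N+1) 0)^2 : ℤ) = ((N:ℤ)+1)^2 := by rw [dd_sq]; push_cast; ring
    have h2 : ((dd N 0)^2 : ℤ) = (N:ℤ)^2 := by rw [dd_sq]; push_cast; ring
    have h1' : (dd (N+1) 0)^2 = (N+1)^2 := by exact_mod_cast h1
    have h2' : (dd N 0)^2 = N^2 := by exact_mod_cast h2
    rw [h1', h2']; ring
  rcases Nat.lt_or_ge (2*N+2) i with hbig | hle
  · simp only [c]
    rw [gb_eq_zero q _ i (by omega), gb_eq_zero q _ i (by omega),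
      if_neg (by omega), if_neg (by omega),
      gb_eq_zero q _ (i-1) (by omega), gb_eq_zero q _ (i-2) (by omega)]
    ring
  rcases Nat.eq_or_lt_of_le hle with rfl | hle2
  · simp only [c]
    rw [gb_eq_zero q (2*N) (2*N+2) (by omega), if_neg (by omega), if_neg (by omega),
      gb_eq_zero q (2*N) (2*N+2-1) (by omega),
      show 2*(N+1) = 2*N+2 by ring, gb_self, show 2*N+2-2 = 2*N by omega, gb_self]
    have h1 : (dd (N+1) (2*N+2))^2 = (N+1)^2 := by
      have : ((dd (N+1) (2*N+2))^2 : ℤ) = ((N:ℤ)+1)^2 := by rw [dd_sq]; push_cast; ring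
      exact_mod_cast this
    have h2 : (dd N (2*N))^2 = N^2 := by
      have : ((dd N (2*N))^2 : ℤ) = (N:ℤ)^2 := by rw [dd_sq]; push_cast; ring
      exact_mod_cast this
    rw [h1, h2, one_mul, one_mul, ← pow_add]
    rw [epow _ _ (show 2*N+1 + N^2 = (N+1)^2 by ring)]
    ring
  · -- main case 1 ≤ i ≤ 2N+1
    obtain ⟨j, rfl⟩ : ∃ j, i = j + 1 := ⟨i - 1, by omega⟩
    obtain ⟨k, hjk⟩ : ∃ k, 2*N = j + k := ⟨2*N - j, by omega⟩
    have hw : pf q (j+1) * pf q (k+1) ≠ 0 := mul_ne_zero (pf_ne q hq _) (pf_ne q hq _)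
    apply mul_right_cancel₀ hw
    set w := pf q (j+1) * pf q (k+1) with hwdef
    have S0 : gb q (2*(N+1)) (j+1) * w = pf q (2*N) * ((1-(q^2)^(2*N+1)) * (1-(q^2)^(2*N+2))) := by
      have h := gb_pf q (2*(N+1)) (j+1) (by omega)
      rw [show 2*(N+1) - (j+1) = k+1 by omega] at h
      rw [hwdef, ← mul_assoc, h, show 2*(N+1) = 2*N+1+1 by ring, pf_succ, pf_succ,
        show 2*N+1+1 = 2*N+2 by ring]
      ring
    have S1 : gb q (2*N) (j+1) * w = pf q (2*N) * ((1-(q^2)^k) * (1-(q^2)^(k+1))) := by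
      rcases Nat.eq_zero_or_pos k with hk0 | hkpos
      · rw [gb_eq_zero q (2*N) (j+1) (by omega), hk0]
        simp
      · have h := gb_pf q (2*N) (j+1) (by omega)
        rw [show 2*N - (j+1) = k-1 by omega] at h
        have e : pf q (k+1) = pf q (k-1) * ((1-(q^2)^k) * (1-(q^2)^(k+1))) := by
          rw [show k+1 = (k-1)+1+1 by omega, pf_succ, pf_succ, show k-1+1 = k by omega]
          ring
        rw [hwdef, e]
        calc gb q (2*N) (j+1) * (pf q (j+1) * (pf q (k-1) * ((1-(q^2)^k) * (1-(q^2)^(k+1)))))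
            = (gb q (2*N) (j+1) * pf q (j+1) * pf q (k-1)) * ((1-(q^2)^k) * (1-(q^2)^(k+1))) := by
              ring
          _ = _ := by rw [h]
    have S2 : gb q (2*N) j * w = pf q (2*N) * ((1-(q^2)^(j+1)) * (1-(q^2)^(k+1))) := by
      have h := gb_pf q (2*N) j (by omega)
      rw [show 2*N - j = k by omega] at h
      rw [hwdef, pf_succ q j, pf_succ q k]
      calc gb q (2*N) j * (pf q j * (1-(q^2)^(j+1)) * (pf q k * (1-(q^2)^(k+1))))
          = (gb q (2*N) j * pf q j * pf q k) * ((1-(q^2)^(j+1)) * (1-(q^2)^(k+1))) := by ring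
        _ = _ := by rw [h]
    have E1 : q^(2*N+1) * q^((dd N (j+1))^2) = q^((dd (N+1) (j+1))^2) * (q^2)^(j+1) := by
      rw [← pow_add, ← pow_mul, ← pow_add]
      apply epow
      have : ((2*N+1 + (dd N (j+1))^2 : ℕ) : ℤ) = (((dd (N+1) (j+1))^2 + 2*(j+1) : ℕ) : ℤ) := by
        push_cast
        rw [dd_sq, dd_sq]
        push_cast
        ring
      exact_mod_cast this
    have E2 : dd N j = dd (N+1) (j+1) := by
      unfold dd
      congr 1
      push_cast
      ring
    simp only [c]
    rw [if_neg (by omega), show j+1-1 = j from rfl, E2]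
    rcases Nat.eq_zero_or_pos j with rfl | hj
    · rw [if_pos (by omega), mul_zero, add_zero]
      have RI0 : (1-(q^2)^(2*N+1)) * (1-(q^2)^(2*N+2))
          = (q^2)^(0+1) * ((1-(q^2)^k) * (1-(q^2)^(k+1)))
            + (1 + (q^2)^(2*N+1)) * ((1-(q^2)^(0+1)) * (1-(q^2)^(k+1))) := by
        rw [show 2*N+1 = k+1 by omega, show 2*N+2 = k+2 by omega]
        ring
      linear_combination (q^((dd (N+1) (0+1))^2)) * S0
        - (gb q (2*N) (0+1) * w) * E1
        - (q^((dd (N+1) (0+1))^2) * (q^2)^(0+1)) * S1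
        - (q^((dd (N+1) (0+1))^2) * (1 + (q^2)^(2*N+1))) * S2
        + (q^((dd (N+1) (0+1))^2) * pf q (2*N)) * RI0
    · rw [if_neg (by omega), show j+1-2 = j-1 by omega]
      have S3 : gb q (2*N) (j-1) * w = pf q (2*N) * ((1-(q^2)^j) * (1-(q^2)^(j+1))) := by
        have h := gb_pf q (2*N) (j-1) (by omega)
        rw [show 2*N - (j-1) = k+1 by omega] at h
        have e : pf q (j+1) = pf q (j-1) * ((1-(q^2)^j) * (1-(q^2)^(j+1))) := by
          rw [show j+1 = (j-1)+1+1 by omega, pf_succ, pf_succ, show j-1+1 = j by omega]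
          ring
        rw [hwdef, e]
        calc gb q (2*N) (j-1) * (pf q (j-1) * ((1-(q^2)^j) * (1-(q^2)^(j+1))) * pf q (k+1))
            = (gb q (2*N) (j-1) * pf q (j-1) * pf q (k+1)) * ((1-(q^2)^j) * (1-(q^2)^(j+1))) := by
              ring
          _ = _ := by rw [h]
      have E3 : q^(2*N+1) * q^((dd N (j-1))^2) = q^((dd (N+1) (j+1))^2) * (q^2)^(k+1) := by
        rw [← pow_add, ← pow_mul, ← pow_add]
        apply epow
        have hj1 : ((j-1 : ℕ) : ℤ) = (j:ℤ) - 1 := by omega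
        have : ((2*N+1 + (dd N (j-1))^2 : ℕ) : ℤ) = (((dd (N+1) (j+1))^2 + 2*(k+1) : ℕ) : ℤ) := by
          push_cast
          rw [dd_sq, dd_sq, hj1]
          have hkz : (k:ℤ) = 2*N - j := by omega
          push_cast
          rw [hkz]
          ring
        exact_mod_cast this
      have RI : (1-(q^2)^(2*N+1)) * (1-(q^2)^(2*N+2))
          = (q^2)^(j+1) * ((1-(q^2)^k) * (1-(q^2)^(k+1)))
            + (1 + (q^2)^(2*N+1)) * ((1-(q^2)^(j+1)) * (1-(q^2)^(k+1)))
            + (q^2)^(k+1) * ((1-(q^2)^j) * (1-(q^2)^(j+1))) := by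
        rw [show 2*N+1 = j+k+1 by omega, show 2*N+2 = j+k+2 by omega]
        ring
      linear_combination (q^((dd (N+1) (j+1))^2)) * S0
        - (gb q (2*N) (j+1) * w) * E1
        - (q^((dd (N+1) (j+1))^2) * (q^2)^(j+1)) * S1
        - (q^((dd (N+1) (j+1))^2) * (1 + (q^2)^(2*N+1))) * S2
        - (gb q (2*N) (j-1) * w) * E3
        - (q^((dd (N+1) (j+1))^2) * (q^2)^(k+1)) * S3
        + (q^((dd (N+1) (j+1))^2) * pf q (2*N)) * RI


lemma pf_def (j : ℕ) : pf q j = ∏ k ∈ range j, (1 - (q^2)^(k+1)) := rfl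

lemma c_def (N i : ℕ) : c q N i = gb q (2*N) i * q ^ ((dd N i)^2) := rfl

lemma c_zero (N i : ℕ) (h : 2*N < i) : c q N i = 0 := by
  unfold c
  rw [gb_eq_zero q _ i h, zero_mul]

lemma c_zero_zero : c q 0 0 = 1 := by
  unfold c
  simp [dd]

lemma sum_c_shift (hq : constantCoeff q = 0) (N : ℕ) (g : ℕ → R) :
    ∑ i ∈ range (2*N+3), g i * c q (N+1) i
      = q^(2*N+1) * ∑ i ∈ range (2*N+1), g i * c q N i
        + (1 + (q^2)^(2*N+1)) * ∑ i ∈ range (2*N+1), g (i+1) * c q N i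
        + q^(2*N+1) * ∑ i ∈ range (2*N+1), g (i+2) * c q N i := by
  have expand : ∀ i ∈ range (2*N+3), g i * c q (N+1) i =
      (g i * (q^(2*N+1) * c q N i))
      + (g i * ((1 + (q^2)^(2*N+1)) * (if i = 0 then 0 else c q N (i-1))))
      + (g i * (q^(2*N+1) * (if i ≤ 1 then 0 else c q N (i-2)))) := by
    intro i _
    rw [c_rec q hq N i]
    ring
  rw [Finset.sum_congr rfl expand, Finset.sum_add_distrib, Finset.sum_add_distrib]
  have T1 : ∑ i ∈ range (2*N+3), g i * (q^(2*N+1) * c q N i)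
      = q^(2*N+1) * ∑ i ∈ range (2*N+1), g i * c q N i := by
    rw [Finset.sum_range_succ, Finset.sum_range_succ, c_zero q N (2*N+1) (by omega),
      c_zero q N (2*N+1+1) (by omega), Finset.mul_sum]
    simp only [mul_zero, add_zero]
    exact Finset.sum_congr rfl fun i _ => by ring
  have T2 : ∑ i ∈ range (2*N+3), g i * ((1 + (q^2)^(2*N+1)) * (if i = 0 then 0 else c q N (i-1)))
      = (1 + (q^2)^(2*N+1)) * ∑ i ∈ range (2*N+1), g (i+1) * c q N i := by
    rw [Finset.sum_range_succ']
    have e : ∀ i ∈ range (2*N+2), g (i+1) * ((1 + (q^2)^(2*N+1)) *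
        (if i+1 = 0 then 0 else c q N (i+1-1))) = g (i+1) * ((1 + (q^2)^(2*N+1)) * c q N i) := by
      intro i _
      rw [if_neg (Nat.succ_ne_zero i), Nat.add_sub_cancel]
    rw [Finset.sum_congr rfl e, if_pos rfl]
    rw [Finset.sum_range_succ, c_zero q N (2*N+1) (by omega), Finset.mul_sum]
    simp only [mul_zero, add_zero]
    exact Finset.sum_congr rfl fun i _ => by ring
  have T3 : ∑ i ∈ range (2*N+3), g i * (q^(2*N+1) * (if i ≤ 1 then 0 else c q N (i-2)))
      = q^(2*N+1) * ∑ i ∈ range (2*N+1), g (i+2) * c q N i := by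
    rw [Finset.sum_range_succ', Finset.sum_range_succ']
    have e : ∀ i ∈ range (2*N+1), g (i+1+1) * (q^(2*N+1) *
        (if i+1+1 ≤ 1 then 0 else c q N (i+1+1-2))) = g (i+2) * (q^(2*N+1) * c q N i) := by
      intro i _
      rw [if_neg (by omega), show i+1+1-2 = i by omega, show i+1+1 = i+2 by omega]
    rw [Finset.sum_congr rfl e, if_pos (by omega), if_pos (by omega), Finset.mul_sum]
    simp only [mul_zero, add_zero]
    exact Finset.sum_congr rfl fun i _ => by ring
  rw [T1, T2, T3]

/-- Finite Cauchy identity, specialization `z = -1`. -/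
lemma cauchy_neg (hq : constantCoeff q = 0) (N : ℕ) :
    ∑ i ∈ range (2*N+1), (-1:R)^(N+i) * c q N i
      = ∏ k ∈ range N, (1 - q^(2*k+1))^2 := by
  induction N with
  | zero => simp [c_zero_zero]
  | succ N ih =>
      have h := sum_c_shift q hq N (fun i => (-1:R)^(N+1+i))
      rw [show 2*(N+1)+1 = 2*N+3 by ring, h, prod_range_succ]
      have r1 : ∑ i ∈ range (2*N+1), (-1:R)^(N+1+i) * c q N i
          = -∑ i ∈ range (2*N+1), (-1:R)^(N+i) * c q N i := by
        rw [← Finset.sum_neg_distrib]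
        refine Finset.sum_congr rfl fun i _ => ?_
        rw [show N+1+i = (N+i)+1 by ring, pow_succ]
        ring
      have r2 : ∑ i ∈ range (2*N+1), (-1:R)^(N+1+(i+1)) * c q N i
          = ∑ i ∈ range (2*N+1), (-1:R)^(N+i) * c q N i := by
        refine Finset.sum_congr rfl fun i _ => ?_
        rw [show N+1+(i+1) = (N+i)+2 by ring, pow_add]
        ring
      have r3 : ∑ i ∈ range (2*N+1), (-1:R)^(N+1+(i+2)) * c q N i
          = -∑ i ∈ range (2*N+1), (-1:R)^(N+i) * c q N i := by
        rw [← Finset.sum_neg_distrib]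
        refine Finset.sum_congr rfl fun i _ => ?_
        rw [show N+1+(i+2) = (N+i)+3 by ring, pow_add, pow_succ, pow_add]
        ring
      rw [r1, r2, r3, ih]
      ring

/-- Finite Cauchy identity, specialization `z = q`. -/
lemma cauchy_psi (hq : constantCoeff q = 0) (N : ℕ) :
    ∑ i ∈ range (2*N+1), q^i * c q N i
      = ∏ k ∈ range N, (q * ((1 + q^(2*k+2)) * (1 + q^(2*k)))) := by
  induction N with
  | zero => simp [c_zero_zero]
  | succ N ih =>
      have h := sum_c_shift q hq N (fun i => q^i)
      rw [show 2*(N+1)+1 = 2*N+3 by ring, h, prod_range_succ]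
      have r2 : ∑ i ∈ range (2*N+1), q^(i+1) * c q N i
          = q * ∑ i ∈ range (2*N+1), q^i * c q N i := by
        rw [Finset.mul_sum]
        refine Finset.sum_congr rfl fun i _ => ?_
        rw [pow_succ]
        ring
      have r3 : ∑ i ∈ range (2*N+1), q^(i+2) * c q N i
          = q^2 * ∑ i ∈ range (2*N+1), q^i * c q N i := by
        rw [Finset.mul_sum]
        refine Finset.sum_congr rfl fun i _ => ?_
        rw [pow_add]
        ring
      rw [r2, r3, ih]
      ring

/-! ### congruence helpers -/

lemma coeff_eq_of_mod {n : ℕ} {A B : R} (h : X^(n+1) ∣ A - B) :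
    coeff n A = coeff n B := by
  have := (PowerSeries.X_pow_dvd_iff.mp h) n (by omega)
  rw [map_sub, sub_eq_zero] at this
  exact this

lemma mod_mul {d : ℕ} {A B C D : R} (h1 : X^d ∣ A - B) (h2 : X^d ∣ C - D) :
    X^d ∣ A*C - B*D := by
  have : A*C - B*D = A*(C-D) + (A-B)*D := by ring
  rw [this]
  exact dvd_add (Dvd.dvd.mul_left h2 A) (Dvd.dvd.mul_right h1 D)

lemma mod_trans {d : ℕ} {A B C : R} (h1 : X^d ∣ A - B) (h2 : X^d ∣ B - C) :
    X^d ∣ A - C := by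
  have : A - C = (A - B) + (B - C) := by ring
  rw [this]; exact dvd_add h1 h2

lemma prod_one_sub_mod {ι : Type*} (s : Finset ι) (e : ι → ℕ) (d : ℕ)
    (h : ∀ k ∈ s, d ≤ e k) : (X:R)^d ∣ (∏ k ∈ s, (1 - X^(e k))) - 1 := by
  induction s using Finset.cons_induction with
  | empty => simp
  | cons a s' hx ih =>
      rw [Finset.prod_cons]
      have h1 : (X:R)^d ∣ (∏ k ∈ s', (1 - X^(e k))) - 1 := ih fun k hk => h k (Finset.mem_cons_of_mem hk)
      have h2 : (X:R)^d ∣ X^(e a) := pow_dvd_pow _ (h a (Finset.mem_cons_self a s'))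
      have : (1 - (X:R)^(e a)) * (∏ k ∈ s', (1 - X^(e k))) - 1
          = ((∏ k ∈ s', (1 - X^(e k))) - 1) - X^(e a) * (∏ k ∈ s', (1 - X^(e k))) := by ring
      rw [this]
      exact dvd_sub h1 (Dvd.dvd.mul_right h2 _)

/-! ### partial products / sums and their limits -/

/-- partial product for `f m`. -/
def Pp (m K : ℕ) : R := ∏ k ∈ range K, (1 - X^(m*(k+1)))

lemma coeff_mul_one_sub_X_pow (n e : ℕ) (A : R) (h : n < e) :
    coeff n (A * (1 - X^e)) = coeff n A := by
  have : A * (1 - X^e) - A = -(A * X^e) := by ring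
  apply coeff_eq_of_mod (n := n)
  rw [this]
  exact dvd_neg.mpr ((pow_dvd_pow (X:R) (by omega : n+1 ≤ e)).mul_left A)

lemma Pp_stab (m : ℕ) (hm : 1 ≤ m) {n K K' : ℕ} (h : n < K) (h' : K ≤ K') :
    coeff n (Pp m K') = coeff n (Pp m K) := by
  induction K' , h' using Nat.le_induction with
  | base => rfl
  | succ K' hK ih =>
      rw [Pp, prod_range_succ, ← Pp, coeff_mul_one_sub_X_pow _ _ _ (by nlinarith), ih]

lemma f_mod (m : ℕ) (hm : 1 ≤ m) {n K : ℕ} (h : n < K) :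
    (X:R)^(n+1) ∣ f m - Pp m K := by
  rw [PowerSeries.X_pow_dvd_iff]
  intro i hi
  rw [map_sub, sub_eq_zero]
  show coeff i (f m) = _
  rw [f, coeff_mk]
  exact (Pp_stab m hm (Nat.lt_succ_self i) (by omega)).symm

/-- sign of an integer parity -/
def sg (j : ℤ) : ℚ := if Even j then 1 else -1

def AZp (m : ℕ) (K : ℕ) : R := ∑ j ∈ Finset.Icc (-(K:ℤ)) K, C (sg j) * X^(m * j.natAbs^2)
def PZp (m : ℕ) (K : ℕ) : R := ∑ j ∈ Finset.Icc (-(K:ℤ)) K, X^(m * j.natAbs^2)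
def VZp (m : ℕ) (K : ℕ) : R := ∑ j ∈ Finset.Icc (-(K:ℤ)) K, X^(m * (j*(j+1)).toNat)

/-- `φ(-q^m) = ∑_{j ∈ ℤ} (-1)^j q^{m j²}`. -/
def PhiS (m : ℕ) : R := mk fun n => coeff n (AZp m (n+1))
/-- `φ(q^m) = ∑_{j ∈ ℤ} q^{m j²}`. -/
def PhiP (m : ℕ) : R := mk fun n => coeff n (PZp m (n+1))
/-- `2 ψ(q^{2m}) = ∑_{j ∈ ℤ} q^{m j (j+1)}`. -/
def PsiZ (m : ℕ) : R := mk fun n => coeff n (VZp m (n+1))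

lemma coeff_sum_Icc_stab (t : ℤ → R) {n K K' : ℕ} (h' : K ≤ K')
    (ht : ∀ j : ℤ, (K:ℤ) < |j| → coeff n (t j) = 0) :
    coeff n (∑ j ∈ Finset.Icc (-(K':ℤ)) K', t j) = coeff n (∑ j ∈ Finset.Icc (-(K:ℤ)) K, t j) := by
  rw [map_sum, map_sum]
  refine (Finset.sum_subset ?_ ?_).symm
  · intro j hj
    simp only [Finset.mem_Icc] at *
    omega
  · intro j hj hnj
    simp only [Finset.mem_Icc] at *
    apply ht
    rcases abs_cases j with ⟨he, _⟩ | ⟨he, _⟩ <;> omega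




lemma xpow_eq (e1 e2 : ℕ) (h : e1 = e2) : (X:R)^e1 = X^e2 := by rw [h]

lemma PhiS_def (m : ℕ) : PhiS m = mk fun n => coeff n (AZp m (n+1)) := rfl

lemma pf_add (a b : ℕ) :
    pf q (a+b) = pf q a * ∏ k ∈ range b, (1 - (q^2)^(a+k+1)) := by
  induction b with
  | zero => simp [pf_def]
  | succ b ih =>
      rw [show a+(b+1) = (a+b)+1 by ring, pf_succ, ih, prod_range_succ,
        show a+b+1 = a+(b+1) by ring]
      ring


lemma pf_gb (hq : constantCoeff q = 0) (K i : ℕ) (hi : i ≤ 2*K) :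
    pf q K * gb q (2*K) i
      = (∏ k ∈ range (dd K i), (1 - (q^2)^((K - dd K i)+k+1)))
        * (∏ k ∈ range (K - dd K i), (1 - (q^2)^((K + dd K i)+k+1))) := by
  set j := dd K i with hj
  have hjK : j ≤ K := by
    rw [hj]; unfold dd; omega
  have h1 := gb_pf q (2*K) i hi
  have h2 : pf q i * pf q (2*K - i) = pf q (K+j) * pf q (K-j) := by
    have hcase : (i = K + j ∧ 2*K - i = K - j) ∨ (i = K - j ∧ 2*K - i = K + j) := by
      rw [hj]; unfold dd; omega
    rcases hcase with ⟨e1, e2⟩ | ⟨e1, e2⟩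
    · rw [e2, e1]
    · rw [e2, e1]; ring
  have h3 : pf q (2*K) = pf q (K+j) * ∏ k ∈ range (K-j), (1 - (q^2)^((K+j)+k+1)) := by
    rw [← pf_add, show K+j+(K-j) = 2*K by omega]
  have h4 : pf q K = pf q (K-j) * ∏ k ∈ range j, (1 - (q^2)^((K-j)+k+1)) := by
    rw [← pf_add, show K-j+j = K by omega]
  have hne : pf q (K+j) * pf q (K-j) ≠ 0 := mul_ne_zero (pf_ne q hq _) (pf_ne q hq _)
  apply mul_right_cancel₀ hne
  calc pf q K * gb q (2*K) i * (pf q (K+j) * pf q (K-j))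
      = pf q K * (gb q (2*K) i * pf q i * pf q (2*K-i)) := by
        rw [mul_assoc (gb q (2*K) i), h2]; ring
    _ = pf q K * pf q (2*K) := by rw [h1]
    _ = _ := by rw [h3, h4]; ring


lemma PhiS_mod (m : ℕ) (hm : 1 ≤ m) {n K : ℕ} (h : n < K) :
    (X:R)^(n+1) ∣ PhiS m - AZp m K := by
  rw [PowerSeries.X_pow_dvd_iff]
  intro i hi
  rw [map_sub, sub_eq_zero]
  have h0 : coeff i (PhiS m) = coeff i (AZp m (i+1)) := by
    rw [PhiS_def, coeff_mk]
  rw [h0]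
  have key : ∀ K', i + 1 ≤ K' → coeff i (AZp m K') = coeff i (AZp m (i+1)) := by
    intro K' hK'
    exact coeff_sum_Icc_stab _ hK' (fun j hj => by
      rw [coeff_C_mul, coeff_X_pow, if_neg, mul_zero]
      intro he
      have h1 : i + 2 ≤ j.natAbs := by
        rcases abs_cases j with ⟨he2, _⟩ | ⟨he2, _⟩ <;> omega
      have h2 : j.natAbs ≤ j.natAbs^2 := by nlinarith
      have h3 : j.natAbs^2 ≤ m * j.natAbs^2 := by nlinarith
      omega)
  rw [key K (by omega)]


lemma PhiP_mod (m : ℕ) (hm : 1 ≤ m) {n K : ℕ} (h : n < K) :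
    (X:R)^(n+1) ∣ PhiP m - PZp m K := by
  rw [PowerSeries.X_pow_dvd_iff]
  intro i hi
  rw [map_sub, sub_eq_zero]
  have h0 : coeff i (PhiP m) = coeff i (PZp m (i+1)) := by
    unfold PhiP
    rw [coeff_mk]
  rw [h0]
  have key : ∀ K', i + 1 ≤ K' → coeff i (PZp m K') = coeff i (PZp m (i+1)) := by
    intro K' hK'
    exact coeff_sum_Icc_stab _ hK' (fun j hj => by
      rw [coeff_X_pow, if_neg]
      intro he
      have h1 : i + 2 ≤ j.natAbs := by
        rcases abs_cases j with ⟨he2, _⟩ | ⟨he2, _⟩ <;> omega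
      have h2 : j.natAbs ≤ j.natAbs^2 := by nlinarith
      have h3 : j.natAbs^2 ≤ m * j.natAbs^2 := by nlinarith
      omega)
  rw [key K (by omega)]

lemma PsiZ_mod (m : ℕ) (hm : 1 ≤ m) {n K : ℕ} (h : n < K) :
    (X:R)^(n+1) ∣ PsiZ m - VZp m K := by
  rw [PowerSeries.X_pow_dvd_iff]
  intro i hi
  rw [map_sub, sub_eq_zero]
  have h0 : coeff i (PsiZ m) = coeff i (VZp m (i+1)) := by
    unfold PsiZ
    rw [coeff_mk]
  rw [h0]
  have key : ∀ K', i + 1 ≤ K' → coeff i (VZp m K') = coeff i (VZp m (i+1)) := by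
    intro K' hK'
    refine coeff_sum_Icc_stab _ hK' (fun j hj => ?_)
    rw [coeff_X_pow, if_neg]
    intro he
    have h1 : i + 2 ≤ j.natAbs := by
      rcases abs_cases j with ⟨he2, _⟩ | ⟨he2, _⟩ <;> omega
    have h2 : (i:ℤ) < j*(j+1) := by
      rcases le_or_gt 0 j with hj0 | hj0
      · have : (i:ℤ) + 2 ≤ j := by omega
        nlinarith [sq_nonneg j]
      · have hmul : ((i:ℤ)+2)*((i:ℤ)+1) ≤ (-j)*((-j)-1) := by
          apply mul_le_mul (by omega) (by omega) (by omega) (by omega)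
        nlinarith [hmul]
    have h3 : i < (j*(j+1)).toNat := Int.lt_toNat.mpr h2
    have h4 : (j*(j+1)).toNat ≤ m * (j*(j+1)).toNat := Nat.le_mul_of_pos_left _ (by omega)
    omega
  rw [key K (by omega)]

lemma pf_eq_Pp (m K : ℕ) : pf ((X:R)^m) K = Pp (2*m) K := by
  rw [pf_def, Pp]
  refine Finset.prod_congr rfl fun k _ => ?_
  rw [← pow_mul, ← pow_mul, xpow_eq (m*(2*(k+1))) (2*m*(k+1)) (by ring)]

lemma pf_gb_mod (m : ℕ) (hm : 1 ≤ m) (K i : ℕ) (hi : i ≤ 2*K) :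
    (X:R)^(2*m*((K - dd K i)+1)) ∣ pf ((X:R)^m) K * gb ((X:R)^m) (2*K) i - 1 := by
  have hq : constantCoeff ((X:R)^m) = 0 := by
    rw [map_pow, constantCoeff_X, zero_pow (by omega)]
  have hdd : dd K i ≤ K := by unfold dd; omega
  rw [pf_gb _ hq K i hi]
  have e2 : ∀ (a : ℕ) (s : Finset ℕ), (∏ k ∈ s, (1 - ((((X:R)^m))^2)^(a+k+1)))
      = ∏ k ∈ s, ((1:R) - X^(2*m*(a+k+1))) := by
    intro a s
    refine Finset.prod_congr rfl fun k _ => ?_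
    rw [← pow_mul, ← pow_mul, xpow_eq (m*(2*(a+k+1))) (2*m*(a+k+1)) (by ring)]
  rw [e2, e2]
  have d1 : (X:R)^(2*m*((K - dd K i)+1)) ∣
      (∏ k ∈ Finset.range (dd K i), ((1:R) - X^(2*m*((K - dd K i)+k+1)))) - 1 :=
    prod_one_sub_mod _ _ _ (fun k _ => Nat.mul_le_mul (le_refl _) (by omega))
  have d2 : (X:R)^(2*m*((K - dd K i)+1)) ∣
      (∏ k ∈ Finset.range (K - dd K i), ((1:R) - X^(2*m*((K + dd K i)+k+1)))) - 1 :=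
    prod_one_sub_mod _ _ _ (fun k _ => Nat.mul_le_mul (le_refl _) (by omega))
  have e3 : ∀ A B : R, A * B - 1 = (A - 1) * B + (B - 1) := by intros; ring
  rw [e3]
  exact dvd_add (d1.mul_right _) d2

lemma sg_coe (K a : ℕ) : C (sg ((a:ℤ) - K)) = (-1:R)^(K+a) := by
  unfold sg
  have hiff : Even ((a:ℤ) - K) ↔ Even (K + a) := by
    rw [Int.even_sub, Nat.even_add]
    simp only [Int.even_coe_nat]
    tauto
  by_cases h : Even (K + a)
  · rw [if_pos (hiff.mpr h), map_one, h.neg_one_pow]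
  · rw [if_neg (fun hc => h (hiff.mp hc)), map_neg, map_one,
      (Nat.odd_iff.mpr (by rw [Nat.even_iff] at h; omega) : Odd (K+a)).neg_one_pow]

/-- Gauss identity: `f(q^m)² = f(q^{2m}) · φ(-q^m)`. -/
theorem gauss_I (m : ℕ) (hm : 1 ≤ m) : f m ^ 2 = f (2*m) * PhiS m := by
  ext n
  set K := n + 1 with hK
  set q : R := X^m with hqdef
  have hq : constantCoeff q = 0 := by
    rw [hqdef, map_pow, constantCoeff_X, zero_pow (by omega)]
  have hsplit : ∀ L, Pp m (2*L) = Pp (2*m) L * ∏ k ∈ range L, (1 - X^(m*(2*k+1))) := by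
    intro L
    induction L with
    | zero => simp [Pp]
    | succ L ih =>
        have hL : Pp m (2*(L+1)) = Pp m (2*L) * ((1 - X^(m*(2*L+1))) * (1 - X^(m*(2*L+2)))) := by
          rw [show 2*(L+1) = (2*L+1)+1 by ring, Pp, prod_range_succ, ← Pp]
          rw [Pp, prod_range_succ, ← Pp]
          rw [xpow_eq (m*(2*L+1+1)) (m*(2*L+2)) (by ring)]
          ring
        have hR1 : Pp (2*m) (L+1) = Pp (2*m) L * (1 - X^(2*m*(L+1))) := by
          rw [Pp, prod_range_succ, ← Pp]
        rw [hL, ih, hR1, prod_range_succ, xpow_eq (m*(2*L+2)) (2*m*(L+1)) (by ring)]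
        ring
  have hpf : pf q K = Pp (2*m) K := by
    rw [pf_def, Pp]
    refine prod_congr rfl fun k _ => ?_
    rw [hqdef, ← pow_mul, ← pow_mul, xpow_eq (m*(2*(k+1))) (2*m*(k+1)) (by ring)]
  have hO : (∏ k ∈ range K, (1 - X^(m*(2*k+1)))) ^ 2
      = ∑ i ∈ range (2*K+1), (-1:R)^(K+i) * c q K i := by
    rw [cauchy_neg q hq K, ← prod_pow]
    refine (prod_congr rfl fun k _ => ?_).symm
    rw [hqdef, ← pow_mul, xpow_eq (m*(2*k+1)) (m*(2*k+1)) rfl]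
  set Aℕ : R := ∑ i ∈ range (2*K+1), (-1:R)^(K+i) * X^(m * (dd K i)^2) with hAdef
  have key1 : (X:R)^(n+1) ∣
      pf q K * (∑ i ∈ range (2*K+1), (-1:R)^(K+i) * c q K i) - Aℕ := by
    rw [Finset.mul_sum, hAdef, ← Finset.sum_sub_distrib]
    apply Finset.dvd_sum
    intro i hi
    have hi2 : i ≤ 2*K := by simp only [mem_range] at hi; omega
    have hdd : dd K i ≤ K := by unfold dd; omega
    have e1 : pf q K * ((-1:R)^(K+i) * c q K i) - (-1:R)^(K+i) * X^(m*(dd K i)^2)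
        = (-1:R)^(K+i) * (X^(m*(dd K i)^2) * (pf q K * gb q (2*K) i - 1)) := by
      rw [c_def, hqdef, ← pow_mul]
      ring
    rw [e1]
    apply Dvd.dvd.mul_left
    have hmain : (X:R)^(2*m*((K - dd K i)+1)) ∣ pf q K * gb q (2*K) i - 1 := by
      rw [pf_gb q hq K i hi2]
      have e2 : ∀ (a : ℕ) (s : Finset ℕ), (∏ k ∈ s, (1 - (q^2)^(a+k+1)))
          = ∏ k ∈ s, (1 - X^(2*m*(a+k+1))) := by
        intro a s
        refine prod_congr rfl fun k _ => ?_
        rw [hqdef, ← pow_mul, ← pow_mul, xpow_eq (m*(2*(a+k+1))) (2*m*(a+k+1)) (by ring)]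
      rw [e2, e2]
      have d1 : (X:R)^(2*m*((K - dd K i)+1)) ∣
          (∏ k ∈ range (dd K i), (1 - X^(2*m*((K - dd K i)+k+1)))) - 1 :=
        prod_one_sub_mod _ _ _ (fun k _ => Nat.mul_le_mul (le_refl _) (by omega))
      have d2 : (X:R)^(2*m*((K - dd K i)+1)) ∣
          (∏ k ∈ range (K - dd K i), (1 - X^(2*m*((K + dd K i)+k+1)))) - 1 :=
        prod_one_sub_mod _ _ _ (fun k _ => Nat.mul_le_mul (le_refl _) (by omega))
      have e3 : ∀ A B : R, A * B - 1 = (A - 1) * B + (B - 1) := by intros; ring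
      rw [e3]
      exact dvd_add (d1.mul_right _) d2
    have hbig : n + 1 ≤ m*(dd K i)^2 + 2*m*((K - dd K i)+1) := by
      set d := dd K i with hddef
      obtain ⟨u, hu⟩ : ∃ u, K = d + u := ⟨K - d, by omega⟩
      have hd2 : d ≤ d^2 := Nat.le_self_pow two_ne_zero d
      have h6 : d^2 ≤ m * d^2 := Nat.le_mul_of_pos_left _ (by omega)
      have h7 : u + 1 ≤ 2*m*(u+1) := Nat.le_mul_of_pos_left _ (by omega)
      have h8 : K - d = u := by omega
      rw [h8]
      linarith
    calc (X:R)^(n+1) ∣ X^(m*(dd K i)^2 + 2*m*((K - dd K i)+1)) := pow_dvd_pow _ hbig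
      _ = X^(m*(dd K i)^2) * X^(2*m*((K - dd K i)+1)) := pow_add _ _ _
      _ ∣ X^(m*(dd K i)^2) * (pf q K * gb q (2*K) i - 1) := mul_dvd_mul_left _ hmain
  have key2 : Aℕ = AZp m K := by
    rw [hAdef, AZp]
    refine Finset.sum_nbij' (fun i => (i:ℤ) - K) (fun b => (b + K).toNat) ?_ ?_ ?_ ?_ ?_
    · intro a ha
      simp only [mem_range] at ha
      simp only [Finset.mem_Icc]
      omega
    · intro b hb
      simp only [Finset.mem_Icc] at hb
      simp only [mem_range]
      omega
    · intro a _
      show (((a:ℤ) - K) + K).toNat = a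
      omega
    · intro b hb
      simp only [Finset.mem_Icc] at hb
      show (((b + (K:ℤ)).toNat : ℕ) : ℤ) - K = b
      omega
    · intro a _
      rw [sg_coe]
      rfl
  -- assemble
  have L1 : (X:R)^(n+1) ∣ f m ^2 - Pp m (2*K) ^2 := by
    have h1 := f_mod m hm (show n < 2*K by omega)
    have h2 := mod_mul h1 h1
    rw [← pow_two, ← pow_two] at h2
    exact h2
  have L2 : Pp m (2*K)^2 = Pp (2*m) K *
      (pf q K * (∑ i ∈ range (2*K+1), (-1:R)^(K+i) * c q K i)) := by
    rw [hsplit K, mul_pow, hO, hpf]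
    ring
  have L3 : (X:R)^(n+1) ∣ Pp m (2*K)^2 - Pp (2*m) K * AZp m K := by
    rw [L2, ← key2]
    have e : Pp (2*m) K * (pf q K * (∑ i ∈ range (2*K+1), (-1:R)^(K+i) * c q K i))
        - Pp (2*m) K * Aℕ
        = Pp (2*m) K * ((pf q K * (∑ i ∈ range (2*K+1), (-1:R)^(K+i) * c q K i)) - Aℕ) := by
      ring
    rw [e]
    exact key1.mul_left _
  have R1 : (X:R)^(n+1) ∣ f (2*m) * PhiS m - Pp (2*m) K * AZp m K :=
    mod_mul (f_mod (2*m) (by omega) (show n < K by omega)) (PhiS_mod m hm (show n < K by omega))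
  exact coeff_eq_of_mod (mod_trans (mod_trans L1 L3) (dvd_sub_comm.mp R1))

lemma cancel_X_pow {a b : ℕ} {C : R} (h : (X:R)^(a+b) ∣ X^a * C) : (X:R)^b ∣ C := by
  obtain ⟨D, hD⟩ := h
  refine ⟨D, ?_⟩
  have hx : (X:R)^a ≠ 0 := pow_ne_zero _ X_ne_zero
  apply mul_left_cancel₀ hx
  rw [hD, pow_add]
  ring

/-- `2ψ(q^{2m}) · f(q^{2m}) = 2 f(q^{4m})²`. -/
theorem gauss_II (m : ℕ) (hm : 1 ≤ m) : PsiZ m * f (2*m) = 2 * f (4*m)^2 := by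
  ext n
  obtain ⟨K, hK⟩ : ∃ K, K = n + 2 := ⟨_, rfl⟩
  set q : R := X^m with hqdef
  have hq : constantCoeff q = 0 := by
    rw [hqdef, map_pow, constantCoeff_X, zero_pow (by omega)]
  set U : ℕ → R := fun L => ∏ k ∈ range L, (1 + X^(2*m*(k+1))) with hU
  set W : R := ∏ k ∈ range K, (1 + (X:R)^(2*m*k)) with hW
  have hProd : (∏ k ∈ range K, (q * ((1 + q^(2*k+2)) * (1 + q^(2*k)))))
      = X^(m*K) * (U K * W) := by
    rw [Finset.prod_mul_distrib, Finset.prod_mul_distrib, Finset.prod_const]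
    have e1 : (∏ k ∈ range K, (1 + q^(2*k+2))) = U K := by
      rw [hU]
      refine prod_congr rfl fun k _ => ?_
      rw [hqdef, ← pow_mul, xpow_eq (m*(2*k+2)) (2*m*(k+1)) (by ring)]
    have e2 : (∏ k ∈ range K, (1 + q^(2*k))) = W := by
      rw [hW]
      refine prod_congr rfl fun k _ => ?_
      rw [hqdef, ← pow_mul, xpow_eq (m*(2*k)) (2*m*k) (by ring)]
    rw [e1, e2, hqdef, ← pow_mul, Finset.card_range]
    try ring
  have htt : ∀ i, i ≤ 2*K → ((dd K i)^2 + i = K + ((((i:ℤ)-K) * ((i:ℤ)-K+1)).toNat)) := by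
    intro i _
    have hd : ((dd K i : ℤ))^2 = ((i:ℤ)-K)^2 := Int.natAbs_sq _
    have hnn : 0 ≤ ((i:ℤ)-K) * ((i:ℤ)-K+1) := by
      rcases le_or_gt 0 ((i:ℤ)-K) with h | h
      · exact mul_nonneg h (by omega)
      · nlinarith [sq_nonneg (2*((i:ℤ)-(K:ℤ))+1)]
    have h2 : (((((i:ℤ)-K) * ((i:ℤ)-K+1)).toNat : ℤ)) = ((i:ℤ)-K) * ((i:ℤ)-K+1) :=
      Int.toNat_of_nonneg hnn
    have h4 : (((dd K i)^2 + i : ℕ) : ℤ) = ((K + ((((i:ℤ)-K) * ((i:ℤ)-K+1)).toNat) : ℕ) : ℤ) := by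
      push_cast
      rw [hd, h2]
      ring
    exact_mod_cast h4
  have claim1 : (X:R)^(m*K + (n+1)) ∣
      pf q K * (∑ i ∈ range (2*K+1), q^i * c q K i)
        - ∑ i ∈ range (2*K+1), X^(m*((dd K i)^2 + i)) := by
    rw [Finset.mul_sum, ← Finset.sum_sub_distrib]
    apply Finset.dvd_sum
    intro i hi
    simp only [mem_range] at hi
    have hi2 : i ≤ 2*K := by omega
    have e0 : (X:R)^(m*((dd K i)^2 + i)) = X^(m*(dd K i)^2) * X^(m*i) := by
      rw [← pow_add]; exact xpow_eq _ _ (by ring)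
    have e1 : pf q K * (q^i * c q K i) - X^(m*((dd K i)^2 + i))
        = X^(m*((dd K i)^2 + i)) * (pf q K * gb q (2*K) i - 1) := by
      rw [c_def, hqdef, ← pow_mul, ← pow_mul, e0]
      ring
    rw [e1]
    have hdK : dd K i ≤ K := by unfold dd; omega
    set d := dd K i with hddef
    obtain ⟨u, hu⟩ : ∃ u, K = d + u := ⟨K - d, by omega⟩
    have hKdi : K ≤ d + i := by rw [hddef]; unfold dd; omega
    have hineq : m*K + (n+1) ≤ m*(d^2 + i) + 2*m*((K - d)+1) := by
      rw [show K - d = u by omega]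
      have hd2z : (2*d : ℤ) ≤ (d:ℤ)^2 + 1 := by nlinarith [sq_nonneg ((d:ℤ) - 1)]
      have hd2 : 2*d ≤ d^2 + 1 := by exact_mod_cast hd2z
      have A1 : m*u ≤ m*i := Nat.mul_le_mul_left _ (by omega)
      have A2 : m*(2*d) ≤ m*(d^2+1) := Nat.mul_le_mul_left _ hd2
      have A2' : 2*(m*d) ≤ m*d^2 + m := by
        calc 2*(m*d) = m*(2*d) := by ring
          _ ≤ m*(d^2+1) := A2
          _ = m*d^2 + m := by ring
      have A5 : d ≤ m*d := Nat.le_mul_of_pos_left _ (by omega)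
      have A6 : u ≤ m*u := Nat.le_mul_of_pos_left _ (by omega)
      have B1 : m*(d^2+i) = m*d^2 + m*i := by ring
      have B2 : 2*m*(u+1) = 2*(m*u) + 2*m := by ring
      have B3 : m*K = m*d + m*u := by rw [hu]; ring
      have hn : n + 1 ≤ d + u + 1 := by omega
      linarith
    calc (X:R)^(m*K + (n+1)) ∣ X^(m*(d^2+i) + 2*m*((K - d)+1)) := pow_dvd_pow _ hineq
      _ = X^(m*(d^2+i)) * X^(2*m*((K - d)+1)) := pow_add _ _ _
      _ ∣ X^(m*(d^2+i)) * (pf q K * gb q (2*K) i - 1) :=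
          mul_dvd_mul_left _ (by rw [hqdef]; exact pf_gb_mod m hm K i hi2)
  have hBsum : (∑ i ∈ range (2*K+1), (X:R)^(m*((dd K i)^2 + i)))
      = X^(m*K) * ∑ i ∈ range (2*K+1), X^(m * ((((i:ℤ)-K) * ((i:ℤ)-K+1)).toNat)) := by
    rw [Finset.mul_sum]
    refine sum_congr rfl fun i hi => ?_
    simp only [mem_range] at hi
    rw [← pow_add]
    exact xpow_eq _ _ (by rw [htt i (by omega)]; ring)
  have hVZ : (∑ i ∈ range (2*K+1), (X:R)^(m * ((((i:ℤ)-K) * ((i:ℤ)-K+1)).toNat))) = VZp m K := by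
    rw [VZp]
    refine Finset.sum_nbij' (fun i => (i:ℤ) - K) (fun b => (b + K).toNat) ?_ ?_ ?_ ?_ ?_
    · intro a ha
      simp only [mem_range] at ha
      simp only [Finset.mem_Icc]
      omega
    · intro b hb
      simp only [Finset.mem_Icc] at hb
      simp only [mem_range]
      omega
    · intro a _
      show (((a:ℤ) - K) + K).toNat = a
      omega
    · intro b hb
      simp only [Finset.mem_Icc] at hb
      show (((b + (K:ℤ)).toNat : ℕ) : ℤ) - K = b
      omega
    · intro a _
      rfl
  have claim2 : (X:R)^(n+1) ∣ pf q K * (U K * W) - VZp m K := by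
    apply cancel_X_pow (a := m*K)
    have e : (X:R)^(m*K) * (pf q K * (U K * W) - VZp m K)
        = pf q K * (X^(m*K) * (U K * W)) - X^(m*K) * VZp m K := by ring
    rw [e, ← hProd, ← cauchy_psi q hq K, ← hVZ, ← hBsum]
    exact claim1
  -- product identities
  have hE_a : ∀ L, pf q L * U L = Pp (4*m) L := by
    intro L
    rw [pf_def, Pp]
    simp only [hU]
    rw [← Finset.prod_mul_distrib]
    refine prod_congr rfl fun k _ => ?_
    have e4 : (q^2)^(k+1) = (X:R)^(2*m*(k+1)) := by
      rw [hqdef, ← pow_mul, ← pow_mul]; exact xpow_eq _ _ (by ring)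
    have e5 : (X:R)^(4*m*(k+1)) = X^(2*m*(k+1)) * X^(2*m*(k+1)) := by
      rw [← pow_add]; exact xpow_eq _ _ (by ring)
    rw [e4, e5]
    ring
  have hE_c : W = 2 * U (n+1) := by
    rw [hW, hK, Finset.prod_range_succ']
    simp only [hU]
    rw [show (2*m*0) = 0 by ring, pow_zero]
    ring
  have hE_d : Pp (2*m) K = Pp (2*m) (n+1) * (1 - X^(2*m*K)) := by
    rw [hK, Pp, prod_range_succ, ← Pp, xpow_eq (2*m*(n+1+1)) (2*m*(n+2)) (by ring)]
  -- assembly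
  have M1 : (X:R)^(n+1) ∣ PsiZ m * f (2*m) - VZp m K * Pp (2*m) K :=
    mod_mul (PsiZ_mod m hm (by omega)) (f_mod (2*m) (by omega) (by omega))
  have hexact : pf q K * (U K * W) * Pp (2*m) K
      = (2 * (Pp (4*m) K * Pp (4*m) (n+1))) * (1 - X^(2*m*K)) := by
    rw [hE_c, hE_d]
    have h1 : pf q K * U K = Pp (4*m) K := hE_a K
    have h2 : Pp (2*m) (n+1) * U (n+1) = Pp (4*m) (n+1) := by
      rw [← pf_eq_Pp m (n+1), ← hqdef]
      exact hE_a (n+1)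
    calc pf q K * (U K * (2 * U (n+1))) * (Pp (2*m) (n+1) * (1 - X^(2*m*K)))
        = 2 * ((pf q K * U K) * (Pp (2*m) (n+1) * U (n+1))) * (1 - X^(2*m*K)) := by ring
      _ = _ := by rw [h1, h2]
  have M2 : (X:R)^(n+1) ∣ VZp m K * Pp (2*m) K - 2 * (Pp (4*m) K * Pp (4*m) (n+1)) := by
    have s1 : (X:R)^(n+1) ∣ VZp m K * Pp (2*m) K - pf q K * (U K * W) * Pp (2*m) K := by
      have e : VZp m K * Pp (2*m) K - pf q K * (U K * W) * Pp (2*m) K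
          = (VZp m K - pf q K * (U K * W)) * Pp (2*m) K := by ring
      rw [e]
      exact Dvd.dvd.mul_right (by
        have := claim2
        rw [dvd_sub_comm] at this
        exact this) _
    have s2 : (X:R)^(n+1) ∣ pf q K * (U K * W) * Pp (2*m) K
        - 2 * (Pp (4*m) K * Pp (4*m) (n+1)) := by
      rw [hexact]
      have e : (2 * (Pp (4*m) K * Pp (4*m) (n+1))) * (1 - X^(2*m*K))
          - 2 * (Pp (4*m) K * Pp (4*m) (n+1))
          = -((2 * (Pp (4*m) K * Pp (4*m) (n+1))) * X^(2*m*K)) := by ring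
      rw [e]
      refine dvd_neg.mpr (Dvd.dvd.mul_left ?_ _)
      refine pow_dvd_pow _ ?_
      have h9 : 2*K ≤ m*(2*K) := Nat.le_mul_of_pos_left _ (by omega)
      have h10 : m*(2*K) = 2*m*K := by ring
      linarith
    exact mod_trans s1 s2
  have M3 : (X:R)^(n+1) ∣ 2 * (Pp (4*m) K * Pp (4*m) (n+1)) - 2 * f (4*m)^2 := by
    have h1 := mod_mul (f_mod (4*m) (by omega) (show n < K by omega))
      (f_mod (4*m) (by omega) (show n < n+1 by omega))
    rw [dvd_sub_comm] at h1
    have e : 2 * (Pp (4*m) K * Pp (4*m) (n+1)) - 2 * f (4*m)^2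
        = 2 * (Pp (4*m) K * Pp (4*m) (n+1) - f (4*m) * f (4*m)) := by ring
    rw [e]
    exact Dvd.dvd.mul_left h1 2
  exact coeff_eq_of_mod (mod_trans M1 (mod_trans M2 M3))

lemma sg_mul (a b : ℤ) : sg (a+b) = sg a * sg b := by
  unfold sg
  by_cases ha : Even a <;> by_cases hb : Even b <;>
    simp [ha, hb, Int.even_add] <;> norm_num

lemma sg_parity {a b : ℤ} (h : Even (a - b)) : sg a = sg b := by
  unfold sg
  have := Int.even_sub.mp h
  by_cases hb : Even b
  · rw [if_pos (this.mpr hb), if_pos hb]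
  · rw [if_neg (fun hc => hb (this.mp hc)), if_neg hb]

lemma sg_add_eq_zero {a b : ℤ} (h : ¬ Even (a + b)) : sg a + sg b = 0 := by
  unfold sg
  rw [Int.even_add] at h
  by_cases hb : Even b
  · rw [if_neg (fun hc => h (iff_of_true hc hb)), if_pos hb]; ring
  · rw [if_pos (by tauto), if_neg hb]; ring

lemma coeff_sum_mul (B₁ B₂ : Finset ℤ) (c₁ c₂ : ℤ → ℚ) (e₁ e₂ : ℤ → ℕ) (n : ℕ) :
    coeff n ((∑ j ∈ B₁, C (c₁ j) * X^(e₁ j)) * (∑ j ∈ B₂, C (c₂ j) * X^(e₂ j)))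
      = ∑ p ∈ B₁ ×ˢ B₂, if e₁ p.1 + e₂ p.2 = n then c₁ p.1 * c₂ p.2 else 0 := by
  rw [Finset.sum_mul_sum]
  rw [← Finset.sum_product']
  rw [map_sum]
  refine sum_congr rfl fun p _ => ?_
  have e : (C (c₁ p.1) * X^(e₁ p.1)) * (C (c₂ p.2) * X^(e₂ p.2))
      = C (c₁ p.1 * c₂ p.2) * X^(e₁ p.1 + e₂ p.2) := by
    rw [map_mul, pow_add]; ring
  rw [e, coeff_C_mul, coeff_X_pow]
  by_cases h : e₁ p.1 + e₂ p.2 = n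
  · rw [if_pos h, if_pos h.symm, mul_one]
  · rw [if_neg h, if_neg (fun hc => h hc.symm), mul_zero]

lemma PZp_C (m K : ℕ) : PZp m K
    = ∑ j ∈ Finset.Icc (-(K:ℤ)) K, C ((fun _ => (1:ℚ)) j) * X^(m * j.natAbs^2) := by
  rw [PZp]
  exact sum_congr rfl fun j _ => by rw [map_one, one_mul]

lemma na_le {m x y n : ℕ} (hm : 1 ≤ m) (h : m*x + m*y = n) : x ≤ n ∧ y ≤ n := by
  have h1 : x ≤ m*x := Nat.le_mul_of_pos_left _ (by omega)
  have h2 : y ≤ m*y := Nat.le_mul_of_pos_left _ (by omega)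
  omega

lemma na_sq_le {m n : ℕ} {a : ℤ} (hm : 1 ≤ m) (h : m * a.natAbs^2 ≤ n) : a.natAbs ≤ n := by
  have h1 : a.natAbs ≤ a.natAbs^2 := Nat.le_self_pow two_ne_zero _
  have h2 : a.natAbs^2 ≤ m * a.natAbs^2 := Nat.le_mul_of_pos_left _ (by omega)
  omega

lemma cond_cast (m n : ℕ) (a b : ℤ) :
    (m * a.natAbs^2 + m * b.natAbs^2 = n) ↔ ((m:ℤ) * a^2 + (m:ℤ) * b^2 = (n:ℤ)) := by
  rw [← Int.natAbs_sq a, ← Int.natAbs_sq b]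
  constructor
  · intro h; exact_mod_cast h
  · intro h; exact_mod_cast h

/-- `φ(q^m) φ(-q^m) = φ(-q^{2m})²`. -/
theorem theta_III (m : ℕ) (hm : 1 ≤ m) : PhiP m * PhiS m = PhiS (2*m)^2 := by
  ext n
  have M1 : coeff n (PhiP m * PhiS m) = coeff n (PZp m (2*n+2) * AZp m (2*n+2)) :=
    coeff_eq_of_mod (mod_mul (PhiP_mod m hm (by omega)) (PhiS_mod m hm (by omega)))
  have M2 : coeff n (PhiS (2*m)^2) = coeff n (AZp (2*m) (n+1) * AZp (2*m) (n+1)) := by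
    rw [pow_two]
    exact coeff_eq_of_mod (mod_mul (PhiS_mod (2*m) (by omega) (by omega))
      (PhiS_mod (2*m) (by omega) (by omega)))
  rw [M1, M2, PZp_C, AZp, AZp, coeff_sum_mul, coeff_sum_mul]
  rw [← Finset.sum_filter, ← Finset.sum_filter]
  set B₁ : Finset ℤ := Finset.Icc (-(2*n+2:ℕ):ℤ) (2*n+2:ℕ) with hB₁
  set B₂ : Finset ℤ := Finset.Icc (-(n+1:ℕ):ℤ) (n+1:ℕ) with hB₂
  set T₁ := (B₁ ×ˢ B₁).filter (fun p : ℤ × ℤ => m * p.1.natAbs^2 + m * p.2.natAbs^2 = n) with hT₁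
  set T₂ := (B₂ ×ˢ B₂).filter
    (fun p : ℤ × ℤ => 2*m * p.1.natAbs^2 + 2*m * p.2.natAbs^2 = n) with hT₂
  rw [← Finset.sum_filter_add_sum_filter_not T₁ (fun p => Even (p.1 + p.2))]
  have hodd : ∑ p ∈ T₁.filter (fun p => ¬ Even (p.1 + p.2)), (fun _ => (1:ℚ)) p.1 * sg p.2 = 0 := by
    apply Finset.sum_involution (fun p _ => (p.2, p.1))
    · intro p hp
      simp only [Finset.mem_filter] at hp
      have := sg_add_eq_zero hp.2
      simp only
      linarith [sg_add_eq_zero (show ¬ Even (p.2 + p.1) by rw [add_comm]; exact hp.2)]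
    · intro p hp hne
      simp only [Finset.mem_filter] at hp
      intro hc
      have : p.1 = p.2 := congrArg Prod.snd hc
      exact hp.2 (by rw [this]; exact Even.add_self _)
    · intro p hp
      simp only [hT₁, Finset.mem_filter, Finset.mem_product] at hp ⊢
      exact ⟨⟨⟨hp.1.1.2, hp.1.1.1⟩, by linarith [hp.1.2]⟩, by rw [add_comm]; exact hp.2⟩
    · intro p _
      rfl
  rw [hodd, add_zero]
  -- even part ↔ RHS
  refine Finset.sum_nbij' (fun p => ((p.1+p.2)/2, (p.1-p.2)/2))
    (fun t => (t.1+t.2, t.1-t.2)) ?_ ?_ ?_ ?_ ?_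
  · intro p hp
    simp only [hT₁, hT₂, Finset.mem_filter, Finset.mem_product, Finset.mem_Icc, hB₁, hB₂] at hp ⊢
    obtain ⟨⟨⟨⟨h1a, h1b⟩, h2a, h2b⟩, hcond⟩, heven⟩ := hp
    obtain ⟨a, ha⟩ := heven
    have hx : p.1.natAbs^2 ≤ n := (na_le hm hcond).1
    have hy : p.2.natAbs^2 ≤ n := (na_le hm hcond).2
    have hx' : p.1.natAbs ≤ n := le_trans (Nat.le_self_pow two_ne_zero _) hx
    have hy' : p.2.natAbs ≤ n := le_trans (Nat.le_self_pow two_ne_zero _) hy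
    have hz : (m:ℤ) * p.1^2 + (m:ℤ) * p.2^2 = n := (cond_cast m n p.1 p.2).mp hcond
    have e1 : (p.1+p.2)/2 = a := by omega
    have e2 : (p.1-p.2)/2 = p.1 - a := by omega
    rw [e1, e2]
    refine ⟨⟨⟨by omega, by omega⟩, by omega, by omega⟩, ?_⟩
    refine (cond_cast (2*m) n a (p.1 - a)).mpr ?_
    push_cast
    linear_combination hz - ((m:ℤ)*(2*a - p.1 + p.2)) * ha
  · intro t ht
    simp only [hT₁, hT₂, Finset.mem_filter, Finset.mem_product, Finset.mem_Icc, hB₁, hB₂] at ht ⊢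
    obtain ⟨⟨⟨h1a, h1b⟩, h2a, h2b⟩, hcond⟩ := ht
    have hx : t.1.natAbs^2 ≤ n := (na_le (show 1 ≤ 2*m by omega) hcond).1
    have hy : t.2.natAbs^2 ≤ n := (na_le (show 1 ≤ 2*m by omega) hcond).2
    have hx' : t.1.natAbs ≤ n := le_trans (Nat.le_self_pow two_ne_zero _) hx
    have hy' : t.2.natAbs ≤ n := le_trans (Nat.le_self_pow two_ne_zero _) hy
    have hz : (2*m:ℤ) * t.1^2 + (2*m:ℤ) * t.2^2 = n := by
      have := (cond_cast (2*m) n t.1 t.2).mp hcond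
      push_cast at this ⊢
      linarith
    exact ⟨⟨⟨⟨by omega, by omega⟩, by omega, by omega⟩,
      (cond_cast m n (t.1+t.2) (t.1-t.2)).mpr (by push_cast; linear_combination hz)⟩,
      ⟨t.1, by ring⟩⟩
  · intro p hp
    simp only [hT₁, Finset.mem_filter] at hp
    obtain ⟨a, ha⟩ := hp.2
    have e1 : (p.1+p.2)/2 = a := by omega
    have e2 : (p.1-p.2)/2 = p.1 - a := by omega
    show ((p.1+p.2)/2 + (p.1-p.2)/2, (p.1+p.2)/2 - (p.1-p.2)/2) = p
    rw [e1, e2, Prod.ext_iff]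
    constructor <;> simp <;> omega
  · intro t _
    show ((t.1+t.2+(t.1-t.2))/2, (t.1+t.2-(t.1-t.2))/2) = t
    rw [Prod.ext_iff]
    constructor <;> simp <;> omega
  · intro p hp
    simp only [hT₁, Finset.mem_filter] at hp
    obtain ⟨a, ha⟩ := hp.2
    have e1 : (p.1+p.2)/2 + (p.1-p.2)/2 = p.1 := by omega
    show (fun _ => (1:ℚ)) p.1 * sg p.2 = sg ((p.1+p.2)/2) * sg ((p.1-p.2)/2)
    rw [one_mul, ← sg_mul, e1]
    exact sg_parity ⟨p.2 - a, by omega⟩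

lemma sg_even {a : ℤ} (h : Even a) : sg a = 1 := by unfold sg; rw [if_pos h]
lemma sg_odd {a : ℤ} (h : ¬ Even a) : sg a = -1 := by unfold sg; rw [if_neg h]

lemma VZp_C (m K : ℕ) : VZp m K
    = ∑ j ∈ Finset.Icc (-(K:ℤ)) K, C ((fun _ => (1:ℚ)) j) * X^(m * (j*(j+1)).toNat) := by
  rw [VZp]
  exact sum_congr rfl fun j _ => by rw [map_one, one_mul]

lemma X_mul_PZp (m K : ℕ) : (X:R) * PZp m K
    = ∑ j ∈ Finset.Icc (-(K:ℤ)) K, C ((fun _ => (1:ℚ)) j) * X^(m * j.natAbs^2 + 1) := by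
  rw [PZp, Finset.mul_sum]
  refine sum_congr rfl fun j _ => ?_
  rw [map_one, one_mul, pow_succ]
  ring

/-- `φ(-q)² = φ(q²)² - 2q·φ(q⁴)·(2ψ(q⁸))/... ` in `ΨZ`-normalization. -/
theorem theta_IV : PhiS 1 ^ 2 = PhiP 2 ^ 2 - 2 * X * (PhiP 4 * PsiZ 4) := by
  ext n
  have M1 : coeff n (PhiS 1 ^ 2) = coeff n (AZp 1 (2*n+2) * AZp 1 (2*n+2)) := by
    rw [pow_two]
    exact coeff_eq_of_mod (mod_mul (PhiS_mod 1 (by omega) (by omega))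
      (PhiS_mod 1 (by omega) (by omega)))
  have M2 : coeff n (PhiP 2 ^ 2 - 2 * X * (PhiP 4 * PsiZ 4))
      = coeff n (PZp 2 (n+1) * PZp 2 (n+1))
        - 2 * coeff n (((X:R) * PZp 4 (n+1)) * VZp 4 (n+1)) := by
    have d1 : (X:R)^(n+1) ∣ PhiP 2 ^2 - PZp 2 (n+1) * PZp 2 (n+1) := by
      rw [pow_two]
      exact mod_mul (PhiP_mod 2 (by omega) (by omega)) (PhiP_mod 2 (by omega) (by omega))
    have d2 : (X:R)^(n+1) ∣ (PhiP 4 * PsiZ 4) - PZp 4 (n+1) * VZp 4 (n+1) :=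
      mod_mul (PhiP_mod 4 (by omega) (by omega)) (PsiZ_mod 4 (by omega) (by omega))
    have d3 : (X:R)^(n+1) ∣ (PhiP 2 ^ 2 - 2 * X * (PhiP 4 * PsiZ 4))
        - (PZp 2 (n+1) * PZp 2 (n+1) - 2 * X * (PZp 4 (n+1) * VZp 4 (n+1))) := by
      have e : (PhiP 2 ^ 2 - 2 * X * (PhiP 4 * PsiZ 4))
          - (PZp 2 (n+1) * PZp 2 (n+1) - 2 * X * (PZp 4 (n+1) * VZp 4 (n+1)))
          = (PhiP 2 ^2 - PZp 2 (n+1) * PZp 2 (n+1))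
            - 2 * X * ((PhiP 4 * PsiZ 4) - PZp 4 (n+1) * VZp 4 (n+1)) := by ring
      rw [e]
      exact dvd_sub d1 (d2.mul_left _)
    rw [coeff_eq_of_mod d3, map_sub]
    congr 1
    have e2 : (2:R) * X * (PZp 4 (n+1) * VZp 4 (n+1))
        = C 2 * (((X:R) * PZp 4 (n+1)) * VZp 4 (n+1)) := by
      have : (C 2 : R) = 2 := by
        simp [map_ofNat]
      rw [this]
      ring
    rw [e2, coeff_C_mul]
  rw [M1, M2]
  unfold AZp
  rw [coeff_sum_mul, PZp_C, coeff_sum_mul, X_mul_PZp, VZp_C, coeff_sum_mul]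
  rw [← Finset.sum_filter, ← Finset.sum_filter, ← Finset.sum_filter]
  set B₁ : Finset ℤ := Finset.Icc (-(2*n+2:ℕ):ℤ) (2*n+2:ℕ) with hB₁
  set B₂ : Finset ℤ := Finset.Icc (-(n+1:ℕ):ℤ) (n+1:ℕ) with hB₂
  set T₁ := (B₁ ×ˢ B₁).filter
    (fun p : ℤ × ℤ => 1 * p.1.natAbs^2 + 1 * p.2.natAbs^2 = n) with hT₁
  set T₂ := (B₂ ×ˢ B₂).filter
    (fun p : ℤ × ℤ => 2 * p.1.natAbs^2 + 2 * p.2.natAbs^2 = n) with hT₂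
  set T₃ := (B₂ ×ˢ B₂).filter
    (fun p : ℤ × ℤ => 4 * p.1.natAbs^2 + 1 + 4 * (p.2*(p.2+1)).toNat = n) with hT₃
  rw [← Finset.sum_filter_add_sum_filter_not T₁ (fun p => Even (p.1 + p.2))]
  have heven : ∑ p ∈ T₁.filter (fun p => Even (p.1 + p.2)), sg p.1 * sg p.2
      = ∑ p ∈ T₂, (fun _ => (1:ℚ)) p.1 * (fun _ => (1:ℚ)) p.2 := by
    refine Finset.sum_nbij' (fun p => ((p.1+p.2)/2, (p.1-p.2)/2))
      (fun t => (t.1+t.2, t.1-t.2)) ?_ ?_ ?_ ?_ ?_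
    · intro p hp
      simp only [hT₁, hT₂, Finset.mem_filter, Finset.mem_product, Finset.mem_Icc, hB₁, hB₂] at hp ⊢
      obtain ⟨⟨⟨⟨h1a, h1b⟩, h2a, h2b⟩, hcond⟩, hev⟩ := hp
      obtain ⟨a, ha⟩ := hev
      have hx : p.1.natAbs^2 ≤ n := (na_le (le_refl 1) hcond).1
      have hy : p.2.natAbs^2 ≤ n := (na_le (le_refl 1) hcond).2
      have hx' : p.1.natAbs ≤ n := le_trans (Nat.le_self_pow two_ne_zero _) hx
      have hy' : p.2.natAbs ≤ n := le_trans (Nat.le_self_pow two_ne_zero _) hy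
      have hz : (1:ℤ) * p.1^2 + (1:ℤ) * p.2^2 = n := (cond_cast 1 n p.1 p.2).mp hcond
      have e1 : (p.1+p.2)/2 = a := by omega
      have e2 : (p.1-p.2)/2 = p.1 - a := by omega
      rw [e1, e2]
      refine ⟨⟨⟨by omega, by omega⟩, by omega, by omega⟩, ?_⟩
      refine (cond_cast 2 n a (p.1 - a)).mpr ?_
      push_cast
      linear_combination hz - (2*a - p.1 + p.2) * ha
    · intro t ht
      simp only [hT₁, hT₂, Finset.mem_filter, Finset.mem_product, Finset.mem_Icc, hB₁, hB₂] at ht ⊢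
      obtain ⟨⟨⟨h1a, h1b⟩, h2a, h2b⟩, hcond⟩ := ht
      have hx : t.1.natAbs^2 ≤ n := (na_le (by omega) hcond).1
      have hy : t.2.natAbs^2 ≤ n := (na_le (by omega) hcond).2
      have hx' : t.1.natAbs ≤ n := le_trans (Nat.le_self_pow two_ne_zero _) hx
      have hy' : t.2.natAbs ≤ n := le_trans (Nat.le_self_pow two_ne_zero _) hy
      have hz : (2:ℤ) * t.1^2 + (2:ℤ) * t.2^2 = n := (cond_cast 2 n t.1 t.2).mp hcond
      exact ⟨⟨⟨⟨by omega, by omega⟩, by omega, by omega⟩,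
        (cond_cast 1 n (t.1+t.2) (t.1-t.2)).mpr (by push_cast; linear_combination hz)⟩,
        ⟨t.1, by ring⟩⟩
    · intro p hp
      simp only [hT₁, Finset.mem_filter] at hp
      obtain ⟨a, ha⟩ := hp.2
      have e1 : (p.1+p.2)/2 = a := by omega
      have e2 : (p.1-p.2)/2 = p.1 - a := by omega
      show ((p.1+p.2)/2 + (p.1-p.2)/2, (p.1+p.2)/2 - (p.1-p.2)/2) = p
      rw [e1, e2, Prod.ext_iff]
      constructor <;> simp <;> omega
    · intro t _
      show ((t.1+t.2+(t.1-t.2))/2, (t.1+t.2-(t.1-t.2))/2) = t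
      rw [Prod.ext_iff]
      constructor <;> simp <;> omega
    · intro p hp
      simp only [hT₁, Finset.mem_filter] at hp
      show sg p.1 * sg p.2 = (fun _ => (1:ℚ)) ((p.1+p.2)/2) * (fun _ => (1:ℚ)) ((p.1-p.2)/2)
      simp only
      rw [← sg_mul, sg_even hp.2, mul_one]
  have hodd : ∑ p ∈ T₁.filter (fun p => ¬ Even (p.1 + p.2)), sg p.1 * sg p.2
      = - (2 * ∑ p ∈ T₃, (fun _ => (1:ℚ)) p.1 * (fun _ => (1:ℚ)) p.2) := by
    have hval : ∑ p ∈ T₁.filter (fun p => ¬ Even (p.1 + p.2)), sg p.1 * sg p.2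
        = ∑ p ∈ T₁.filter (fun p => ¬ Even (p.1 + p.2)), (-1:ℚ) := by
      refine sum_congr rfl fun p hp => ?_
      simp only [Finset.mem_filter] at hp
      rw [← sg_mul, sg_odd hp.2]
    rw [hval]
    set O := T₁.filter (fun p => ¬ Even (p.1 + p.2)) with hO
    rw [← Finset.sum_filter_add_sum_filter_not O (fun p => Even p.1)]
    have hswap : ∑ p ∈ O.filter (fun p => ¬ Even p.1), (-1:ℚ)
        = ∑ p ∈ O.filter (fun p => Even p.1), (-1:ℚ) := by
      refine Finset.sum_nbij' (fun p => (p.2, p.1)) (fun p => (p.2, p.1)) ?_ ?_ ?_ ?_ ?_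
      · intro p hp
        simp only [hO, hT₁, Finset.mem_filter, Finset.mem_product] at hp ⊢
        obtain ⟨⟨⟨⟨hb1, hb2⟩, hcond⟩, hpar⟩, hodd1⟩ := hp
        refine ⟨⟨⟨⟨hb2, hb1⟩, by linarith⟩, fun hc => hpar (by rw [add_comm]; exact hc)⟩, ?_⟩
        rw [Int.even_add] at hpar
        tauto
      · intro p hp
        simp only [hO, hT₁, Finset.mem_filter, Finset.mem_product] at hp ⊢
        obtain ⟨⟨⟨⟨hb1, hb2⟩, hcond⟩, hpar⟩, hev1⟩ := hp
        refine ⟨⟨⟨⟨hb2, hb1⟩, by linarith⟩, fun hc => hpar (by rw [add_comm]; exact hc)⟩, ?_⟩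
        rw [Int.even_add] at hpar
        tauto
      · intro p _; rfl
      · intro p _; rfl
      · intro p _; rfl
    have hbij : ∑ p ∈ O.filter (fun p => Even p.1), (-1:ℚ) = ∑ p ∈ T₃, (-1:ℚ) := by
      refine Finset.sum_nbij' (fun p => (p.1/2, (p.2-1)/2)) (fun t => (2*t.1, 2*t.2+1))
        ?_ ?_ ?_ ?_ ?_
      · intro p hp
        simp only [hO, hT₁, hT₃, Finset.mem_filter, Finset.mem_product, Finset.mem_Icc,
          hB₁, hB₂] at hp ⊢
        obtain ⟨⟨⟨⟨⟨h1a, h1b⟩, h2a, h2b⟩, hcond⟩, hpar⟩, hev⟩ := hp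
        obtain ⟨a, ha⟩ := hev
        have hodd2 : ¬ Even p.2 := by
          rw [Int.even_add] at hpar
          tauto
        obtain ⟨b, hb⟩ : ∃ b, p.2 = 2*b+1 := by
          rcases Int.even_or_odd p.2 with h | h
          · exact absurd h hodd2
          · obtain ⟨b, hb⟩ := h; exact ⟨b, hb⟩
        have hx : p.1.natAbs^2 ≤ n := (na_le (le_refl 1) hcond).1
        have hy : p.2.natAbs^2 ≤ n := (na_le (le_refl 1) hcond).2
        have hx' : p.1.natAbs ≤ n := le_trans (Nat.le_self_pow two_ne_zero _) hx
        have hy' : p.2.natAbs ≤ n := le_trans (Nat.le_self_pow two_ne_zero _) hy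
        have hz : (1:ℤ) * p.1^2 + (1:ℤ) * p.2^2 = n := (cond_cast 1 n p.1 p.2).mp hcond
        have e1 : p.1/2 = a := by omega
        have e2 : (p.2-1)/2 = b := by omega
        rw [e1, e2]
        refine ⟨⟨by omega, by omega⟩, ?_⟩
        -- 4a² + 1 + 4(b(b+1)) = n
        have hbnn : 0 ≤ b*(b+1) := by nlinarith [sq_nonneg (2*b+1)]
        have hcast : ((b*(b+1)).toNat : ℤ) = b*(b+1) := Int.toNat_of_nonneg hbnn
        have goalz : ((4 * a.natAbs^2 + 1 + 4 * (b*(b+1)).toNat : ℕ) : ℤ) = (n:ℤ) := by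
          push_cast
          rw [sq_abs, hcast]
          linear_combination hz - (p.1 + 2*a) * ha - (p.2 + 2*b + 1) * hb
        exact_mod_cast goalz
      · intro t ht
        simp only [hO, hT₁, hT₃, Finset.mem_filter, Finset.mem_product, Finset.mem_Icc,
          hB₁, hB₂] at ht ⊢
        obtain ⟨⟨⟨h1a, h1b⟩, h2a, h2b⟩, hcond⟩ := ht
        have hbnn : 0 ≤ t.2*(t.2+1) := by nlinarith [sq_nonneg (2*t.2+1)]
        have hcast : ((t.2*(t.2+1)).toNat : ℤ) = t.2*(t.2+1) := Int.toNat_of_nonneg hbnn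
        have hz1 : (4:ℤ) * t.1^2 + 1 + 4*(t.2*(t.2+1)) = n := by
          have h0 : ((4 * t.1.natAbs^2 + 1 + 4*(t.2*(t.2+1)).toNat : ℕ) : ℤ) = (n:ℤ) := by
            exact_mod_cast hcond
          push_cast at h0
          rw [sq_abs, hcast] at h0
          exact h0
        -- bounds
        have hsq1 : (2*t.1)^2 ≤ (n:ℤ) := by nlinarith
        have hsq2 : (2*t.2+1)^2 ≤ (n:ℤ) := by nlinarith
        have hb1 : (2*t.1).natAbs ≤ n := by
          have : ((2*t.1).natAbs:ℤ)^2 ≤ (n:ℤ) := by rw [Int.natAbs_sq]; exact hsq1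
          have h2 : (2*t.1).natAbs^2 ≤ n := by exact_mod_cast this
          exact le_trans (Nat.le_self_pow two_ne_zero _) h2
        have hb2 : (2*t.2+1).natAbs ≤ n := by
          have : ((2*t.2+1).natAbs:ℤ)^2 ≤ (n:ℤ) := by rw [Int.natAbs_sq]; exact hsq2
          have h2 : (2*t.2+1).natAbs^2 ≤ n := by exact_mod_cast this
          exact le_trans (Nat.le_self_pow two_ne_zero _) h2
        refine ⟨⟨⟨⟨⟨by omega, by omega⟩, by omega, by omega⟩, ?_⟩, ?_⟩, ⟨t.1, by ring⟩⟩
        · refine (cond_cast 1 n (2*t.1) (2*t.2+1)).mpr ?_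
          push_cast
          linear_combination hz1
        · intro ⟨r, hr⟩
          omega
      · intro p hp
        simp only [hO, hT₁, Finset.mem_filter] at hp
        obtain ⟨⟨_, hpar⟩, hev⟩ := hp
        obtain ⟨a, ha⟩ := hev
        have hodd2 : ¬ Even p.2 := by
          rw [Int.even_add] at hpar
          tauto
        have : ¬ (2 ∣ p.2) := fun ⟨r, hr⟩ => hodd2 ⟨r, by omega⟩
        show (2*(p.1/2), 2*((p.2-1)/2)+1) = p
        rw [Prod.ext_iff]
        constructor <;> simp <;> omega
      · intro t _
        show ((2*t.1)/2, (2*t.2+1-1)/2) = t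
        rw [Prod.ext_iff]
        constructor <;> simp <;> omega
      · intro p _; rfl
    rw [hswap, hbij]
    have e1' : ∑ p ∈ T₃, ((fun _ => (1:ℚ)) p.1 * (fun _ => (1:ℚ)) p.2) = ∑ _p ∈ T₃, (1:ℚ) :=
      sum_congr rfl fun p _ => by simp
    rw [e1', Finset.sum_const, Finset.sum_const, nsmul_eq_mul, nsmul_eq_mul]
    ring
  rw [heven, hodd]
  ring

lemma constantCoeff_f (m : ℕ) (hm : 1 ≤ m) : constantCoeff (f m) = 1 := by
  have h0 : constantCoeff (f m) = coeff 0 (f m) := by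
    rw [PowerSeries.coeff_zero_eq_constantCoeff]
  rw [h0, f, coeff_mk, PowerSeries.coeff_zero_eq_constantCoeff, map_prod]
  apply Finset.prod_eq_one
  intro k _
  rw [map_sub, map_one, map_pow, constantCoeff_X, zero_pow (by positivity), sub_zero]

lemma f_ne_zero (m : ℕ) (hm : 1 ≤ m) : f m ≠ 0 := by
  intro h
  have := constantCoeff_f m hm
  rw [h, map_zero] at this
  exact zero_ne_one this

theorem cleared :
    f 1 ^ 4 * (f 2 ^ 2 * f 4 ^ 2 * f 8 ^ 4) = f 4 ^ 12 - 4 * X * (f 2 ^ 4 * f 8 ^ 8) := by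
  have g1 : f 1 ^ 2 = f 2 * PhiS 1 := by
    have := gauss_I 1 (by norm_num); norm_num at this; exact this
  have g2 : f 2 ^ 2 = f 4 * PhiS 2 := by
    have := gauss_I 2 (by norm_num); norm_num at this; exact this
  have g4 : f 4 ^ 2 = f 8 * PhiS 4 := by
    have := gauss_I 4 (by norm_num); norm_num at this; exact this
  have g8 : f 8 ^ 2 = f 16 * PhiS 8 := by
    have := gauss_I 8 (by norm_num); norm_num at this; exact this
  have psi : PsiZ 4 * f 8 = 2 * f 16 ^ 2 := by
    have := gauss_II 4 (by norm_num); norm_num at this; exact this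
  have t2 : PhiP 2 * PhiS 2 = PhiS 4 ^ 2 := by
    have := theta_III 2 (by norm_num); norm_num at this; exact this
  have t4 : PhiP 4 * PhiS 4 = PhiS 8 ^ 2 := by
    have := theta_III 4 (by norm_num); norm_num at this; exact this
  have t0 := theta_IV
  have step1 : f 1 ^ 4 = f 2 ^ 2 * (PhiP 2 ^ 2 - 2 * X * (PhiP 4 * PsiZ 4)) := by
    linear_combination (f 1 ^ 2 + f 2 * PhiS 1) * g1 + f 2 ^ 2 * t0
  have hA : f 2 ^ 4 * PhiP 2 ^ 2 = f 4 ^ 2 * PhiS 4 ^ 4 := by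
    linear_combination (PhiP 2 ^ 2 * (f 2 ^ 2 + f 4 * PhiS 2)) * g2
      + (f 4 ^ 2 * (PhiP 2 * PhiS 2 + PhiS 4 ^ 2)) * t2
  have part1 : f 2 ^ 4 * f 4 ^ 2 * f 8 ^ 4 * PhiP 2 ^ 2 = f 4 ^ 12 := by
    linear_combination (f 4 ^ 2 * f 8 ^ 4) * hA
      - (f 4 ^ 4 * (f 8 * PhiS 4 + f 4 ^ 2) * ((f 8 * PhiS 4) ^ 2 + (f 4 ^ 2) ^ 2)) * g4
  have hB : f 4 ^ 2 * PhiP 4 = f 8 * PhiS 8 ^ 2 := by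
    linear_combination PhiP 4 * g4 + f 8 * t4
  have part2 : f 2 ^ 4 * f 4 ^ 2 * f 8 ^ 4 * (PhiP 4 * PsiZ 4) = 2 * (f 2 ^ 4 * f 8 ^ 8) := by
    linear_combination (f 2 ^ 4 * f 8 ^ 4 * PsiZ 4) * hB
      + (f 2 ^ 4 * f 8 ^ 4 * PhiS 8 ^ 2) * psi
      + (-(2 * f 2 ^ 4 * f 8 ^ 4 * (f 16 * PhiS 8 + f 8 ^ 2))) * g8
  linear_combination (f 2 ^ 2 * f 4 ^ 2 * f 8 ^ 4) * step1 + part1 + (-(2 * X)) * part2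


end

end Diss

open Diss in
/-- $f_1^4 = f_4^{10}/(f_2^2 f_8^4) - 4q f_2^2 f_8^4/f_4^2$. -/
theorem dissection_f1_fourth :
    (f 1) ^ 4 =
      (f 4) ^ 10 * ((f 2) ^ 2 * (f 8) ^ 4)⁻¹
        - 4 * PowerSeries.X * (f 2) ^ 2 * (f 8) ^ 4 * ((f 4) ^ 2)⁻¹ := by
  have hu : constantCoeff (f 2 ^ 2 * f 8 ^ 4) ≠ 0 := by
    rw [map_mul, map_pow, map_pow, constantCoeff_f 2 (by norm_num),
      constantCoeff_f 8 (by norm_num)]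
    norm_num
  have hv : constantCoeff (f 4 ^ 2) ≠ 0 := by
    rw [map_pow, constantCoeff_f 4 (by norm_num)]
    norm_num
  have hun : (f 2 ^ 2 * f 8 ^ 4) * (f 4 ^ 2) ≠ 0 := by
    intro h
    rcases mul_eq_zero.mp h with h | h
    · exact hu (by rw [h, map_zero])
    · exact hv (by rw [h, map_zero])
  apply mul_right_cancel₀ hun
  have e1 : (f 2 ^ 2 * f 8 ^ 4)⁻¹ * (f 2 ^ 2 * f 8 ^ 4) = 1 :=
    PowerSeries.inv_mul_cancel _ hu
  have e2 : (f 4 ^ 2)⁻¹ * (f 4 ^ 2) = 1 := PowerSeries.inv_mul_cancel _ hv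
  calc f 1 ^ 4 * ((f 2 ^ 2 * f 8 ^ 4) * f 4 ^ 2)
      = f 1 ^ 4 * (f 2 ^ 2 * f 4 ^ 2 * f 8 ^ 4) := by ring
    _ = f 4 ^ 12 - 4 * X * (f 2 ^ 4 * f 8 ^ 8) := cleared
    _ = (f 4 ^ 10 * ((f 2 ^ 2 * f 8 ^ 4)⁻¹ * (f 2 ^ 2 * f 8 ^ 4))) * f 4 ^ 2
        - 4 * X * f 2 ^ 2 * f 8 ^ 4 * ((f 4 ^ 2)⁻¹ * (f 4 ^ 2)) * (f 2 ^ 2 * f 8 ^ 4) := by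
          rw [e1, e2]; ring
    _ = (f 4 ^ 10 * (f 2 ^ 2 * f 8 ^ 4)⁻¹
        - 4 * X * f 2 ^ 2 * f 8 ^ 4 * (f 4 ^ 2)⁻¹) * ((f 2 ^ 2 * f 8 ^ 4) * f 4 ^ 2) := by
          ring
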